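/- If β₁, …, β_q are positive roots forming an antichain in the root poset of a crystallographic root system, then β₁, …, β_q are linearly independent. -/

import Mathlib

open Finset Submodule
open scoped Classical

/-- A (reduced) crystallographic root system in the Euclidean space `ℝⁿ`,
together with a chosen simple system `Δ` and the corresponding positive
roots `Pos`, and the (nonnegative integer) coordinates `coeff β a` of a
positive root `β` with respect to the simple roots. -/
structure CRS (n : ℕ) where
  Φ : Finset (EuclideanSpace ℝ (Fin n))
  Δ : Finset (EuclideanSpace ℝ (Fin n))
  Pos : Finset (EuclideanSpace ℝ (Fin n))
  coeff : EuclideanSpace ℝ (Fin n) → EuclideanSpace ℝ (Fin n) → ℕ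
  zero_notmem : (0 : EuclideanSpace ℝ (Fin n)) ∉ Φ
  span_top : Submodule.span ℝ (Φ : Set (EuclideanSpace ℝ (Fin n))) = ⊤
  Δ_sub : Δ ⊆ Pos
  Pos_sub : Pos ⊆ Φ
  neg_mem : ∀ α ∈ Φ, -α ∈ Φ
  pos_or_neg : ∀ α ∈ Φ, α ∈ Pos ∨ -α ∈ Pos
  not_pos_and_neg : ∀ α ∈ Pos, -α ∉ Pos
  reduced : ∀ α ∈ Φ, ∀ c : ℝ, c • α ∈ Φ → c = 1 ∨ c = -1
  reflect_mem : ∀ α ∈ Φ, ∀ β ∈ Φ,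
    β - ((2 * inner ℝ α β / inner ℝ α α : ℝ)) • α ∈ Φ
  cartan_int : ∀ α ∈ Φ, ∀ β ∈ Φ, ∃ z : ℤ, (2 * inner ℝ α β / inner ℝ α α : ℝ) = z
  Δ_indep : LinearIndependent ℝ (fun a : Δ => (a : EuclideanSpace ℝ (Fin n)))
  pos_eq_sum : ∀ β ∈ Pos, β = ∑ a ∈ Δ, (coeff β a : ℝ) • a

namespace CRS

variable {n : ℕ}

/-- The height of a positive root: the sum of its coordinates over `Δ`. -/
def ht (R : CRS n) (β : EuclideanSpace ℝ (Fin n)) : ℕ := ∑ a ∈ R.Δ, R.coeff β a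

/-- The root order: `rle β α` means `β ≤ α`, i.e. `α - β` is a nonnegative
integer combination of the simple roots. -/
def rle (R : CRS n) (β α : EuclideanSpace ℝ (Fin n)) : Prop :=
  ∃ c : EuclideanSpace ℝ (Fin n) → ℕ, α - β = ∑ a ∈ R.Δ, (c a : ℝ) • a

/-- An ideal of the positive root poset: a downward closed set of positive roots. -/
def IsIdeal (R : CRS n) (I : Finset (EuclideanSpace ℝ (Fin n))) : Prop :=
  I ⊆ R.Pos ∧ ∀ α ∈ I, ∀ β ∈ R.Pos, R.rle β α → β ∈ I

/-- Irreducibility: the simple system cannot be split into two nonempty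
mutually orthogonal parts. -/
def Irred (R : CRS n) : Prop :=
  ∀ s t : Finset (EuclideanSpace ℝ (Fin n)), s ∪ t = R.Δ → Disjoint s t →
    (∀ a ∈ s, ∀ b ∈ t, (inner ℝ a b : ℝ) = 0) → s = ∅ ∨ t = ∅

/-- The positive roots of the localized root system `Φ_X = Φ ∩ X^⊥`. -/
noncomputable def PosIn (R : CRS n) (X : Submodule ℝ (EuclideanSpace ℝ (Fin n))) :
    Finset (EuclideanSpace ℝ (Fin n)) :=
  R.Pos.filter (fun β => β ∈ Xᗮ)

end CRS

/-- The hyperplane orthogonal to a root `β`. -/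
noncomputable def H {n : ℕ} (β : EuclideanSpace ℝ (Fin n)) : Submodule ℝ (EuclideanSpace ℝ (Fin n)) :=
  (ℝ ∙ β)ᗮ

/-- The simple system (the indecomposable elements) of a positive system `P`. -/
noncomputable def simpleOf {n : ℕ} (P : Finset (EuclideanSpace ℝ (Fin n))) :
    Finset (EuclideanSpace ℝ (Fin n)) :=
  P.filter (fun γ => ¬ ∃ β₁ ∈ P, ∃ β₂ ∈ P, γ = β₁ + β₂)


section AuxAntichain

variable {n : ℕ}

local notation "E" => EuclideanSpace ℝ (Fin n)

lemma CRS.root_ne_zero (R : CRS n) {α : E} (hα : α ∈ R.Φ) : α ≠ 0 := by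
  intro h; exact R.zero_notmem (h ▸ hα)

lemma inner_self_pos_of_ne_zero {x : E} (hx : x ≠ 0) : (0:ℝ) < inner ℝ x x := by
  rw [real_inner_self_eq_norm_sq]
  exact pow_pos (norm_pos_iff.mpr hx) 2

/-- strict Cauchy–Schwarz for non-proportional roots -/
lemma CRS.strict_cs (R : CRS n) {α β : E} (hα : α ∈ R.Φ) (hβ : β ∈ R.Φ)
    (hne : α ≠ β) (hpos : (0:ℝ) < inner ℝ α β) :
    (inner ℝ α β : ℝ)^2 < (inner ℝ α α : ℝ) * inner ℝ β β := by
  have hα0 : α ≠ 0 := R.root_ne_zero hα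
  have hnorm : ‖β‖ • α ≠ ‖α‖ • β := by
    intro h
    have hα0' : ‖α‖ ≠ 0 := norm_ne_zero_iff.mpr hα0
    have hβeq : β = (‖β‖ / ‖α‖) • α := by
      have h2 : (‖α‖:ℝ)⁻¹ • (‖β‖ • α) = (‖α‖:ℝ)⁻¹ • (‖α‖ • β) := by rw [h]
      rw [smul_smul, smul_smul, inv_mul_cancel₀ hα0', one_smul] at h2
      rw [div_eq_inv_mul]
      exact h2.symm
    have hmem : (‖β‖ / ‖α‖) • α ∈ R.Φ := hβeq ▸ hβ
    have hc := R.reduced α hα _ hmem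
    have hcpos : 0 ≤ ‖β‖ / ‖α‖ := by positivity
    rcases hc with hc | hc
    · rw [hc, one_smul] at hβeq; exact hne (hβeq.symm)
    · rw [hc] at hcpos; norm_num at hcpos
  have h1 : (inner ℝ α β : ℝ) < ‖α‖ * ‖β‖ := inner_lt_norm_mul_iff_real.mpr hnorm
  have h2 : (inner ℝ α β : ℝ)^2 < (‖α‖ * ‖β‖)^2 := by
    apply pow_lt_pow_left₀ h1 hpos.le
    norm_num
  calc (inner ℝ α β : ℝ)^2 < (‖α‖ * ‖β‖)^2 := h2
    _ = (inner ℝ α α : ℝ) * inner ℝ β β := by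
        rw [mul_pow, ← real_inner_self_eq_norm_sq, ← real_inner_self_eq_norm_sq]

/-- If two distinct roots have positive inner product, their difference is a root. -/
lemma CRS.sub_mem (R : CRS n) {α β : E} (hα : α ∈ R.Φ) (hβ : β ∈ R.Φ)
    (hne : α ≠ β) (hpos : (0:ℝ) < inner ℝ α β) : α - β ∈ R.Φ := by
  have hαα : (0:ℝ) < inner ℝ α α := inner_self_pos_of_ne_zero (R.root_ne_zero hα)
  have hββ : (0:ℝ) < inner ℝ β β := inner_self_pos_of_ne_zero (R.root_ne_zero hβ)
  obtain ⟨za, hza⟩ := R.cartan_int α hα β hβ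
  obtain ⟨zb, hzb⟩ := R.cartan_int β hβ α hα
  have hsym : (inner ℝ β α : ℝ) = inner ℝ α β := real_inner_comm α β
  have hza_pos : (0:ℝ) < za := by
    rw [← hza]; positivity
  have hzb_pos : (0:ℝ) < zb := by
    rw [← hzb, hsym]; positivity
  have hza1 : (1:ℤ) ≤ za := by exact_mod_cast hza_pos
  have hzb1 : (1:ℤ) ≤ zb := by exact_mod_cast hzb_pos
  have hprod : ((za : ℝ)) * zb < 4 := by
    rw [← hza, ← hzb, hsym]
    have hcs := R.strict_cs hα hβ hne hpos
    rw [div_mul_div_comm]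
    rw [div_lt_iff₀ (by positivity)]
    ring_nf
    nlinarith [hcs]
  have hprodz : za * zb < 4 := by exact_mod_cast hprod
  have hone : za = 1 ∨ zb = 1 := by
    by_contra hc
    push_neg at hc
    have h2a : 2 ≤ za := by omega
    have h2b : 2 ≤ zb := by omega
    nlinarith
  rcases hone with h1 | h1
  · -- 2⟪α,β⟫/⟪α,α⟫ = 1, so s_α(β) = β - α ∈ Φ
    have := R.reflect_mem α hα β hβ
    rw [hza, h1] at this
    simp only [Int.cast_one, one_smul] at this
    have := R.neg_mem _ this
    simpa [neg_sub] using this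
  · have := R.reflect_mem β hβ α hα
    rw [hzb, h1] at this
    simpa using this

lemma CRS.rle_of_sub_pos (R : CRS n) {α β : E} (h : α - β ∈ R.Pos) : R.rle β α :=
  ⟨R.coeff (α - β), R.pos_eq_sum _ h⟩

/-- in an antichain, distinct elements have nonpositive inner product -/
lemma CRS.anti_inner_nonpos (R : CRS n) {B : Finset E} (hB : B ⊆ R.Pos)
    (hanti : ∀ α ∈ B, ∀ β ∈ B, α ≠ β → ¬ R.rle β α)
    {α β : E} (hα : α ∈ B) (hβ : β ∈ B) (hne : α ≠ β) :
    (inner ℝ α β : ℝ) ≤ 0 := by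
  by_contra hc
  push_neg at hc
  have hαΦ : α ∈ R.Φ := R.Pos_sub (hB hα)
  have hβΦ : β ∈ R.Φ := R.Pos_sub (hB hβ)
  have hsub : α - β ∈ R.Φ := R.sub_mem hαΦ hβΦ hne hc
  rcases R.pos_or_neg _ hsub with h | h
  · exact hanti α hα β hβ hne (R.rle_of_sub_pos h)
  · rw [neg_sub] at h
    exact hanti β hβ α hα hne.symm (R.rle_of_sub_pos h)

/-- a nonnegative, not-all-zero combination of positive roots is nonzero;
stated: if a positive combination sums to zero, the support is empty -/
lemma CRS.pos_comb_ne_zero (R : CRS n) {S : Finset E} (hS : S ⊆ R.Pos)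
    (g : E → ℝ) (hg : ∀ b ∈ S, 0 < g b)
    (hsum : ∑ b ∈ S, g b • b = 0) : S = ∅ := by
  -- rewrite each b via simple roots
  have hcoords : ∀ a ∈ R.Δ, ∑ b ∈ S, g b * (R.coeff b a : ℝ) = 0 := by
    have hsum2 : ∑ a ∈ R.Δ, (∑ b ∈ S, g b * (R.coeff b a : ℝ)) • a = 0 := by
      have h1 : ∑ b ∈ S, g b • b = ∑ b ∈ S, ∑ a ∈ R.Δ, (g b * (R.coeff b a : ℝ)) • a := by
        apply Finset.sum_congr rfl
        intro b hb
        nth_rewrite 2 [R.pos_eq_sum b (hS hb)]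
        rw [Finset.smul_sum]
        apply Finset.sum_congr rfl
        intro a _
        rw [smul_smul]
      rw [h1, Finset.sum_comm] at hsum
      rw [← hsum]
      apply Finset.sum_congr rfl
      intro a _
      rw [Finset.sum_smul]
    have hind := R.Δ_indep
    rw [Fintype.linearIndependent_iff] at hind
    have := hind (fun a => ∑ b ∈ S, g b * (R.coeff b a : ℝ)) ?_
    · intro a ha
      exact this ⟨a, ha⟩
    · rw [← hsum2]
      rw [← Finset.sum_attach R.Δ (fun a => (∑ b ∈ S, g b * (R.coeff b a : ℝ)) • a)]
      rfl
  by_contra hne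
  obtain ⟨b0, hb0⟩ := Finset.nonempty_iff_ne_empty.mpr hne
  -- b0 has a nonzero coordinate
  have hb0Pos := hS hb0
  have hb0ne : b0 ≠ 0 := R.root_ne_zero (R.Pos_sub hb0Pos)
  have : ∃ a ∈ R.Δ, 0 < (R.coeff b0 a : ℝ) := by
    by_contra hno
    push_neg at hno
    apply hb0ne
    rw [R.pos_eq_sum b0 hb0Pos]
    apply Finset.sum_eq_zero
    intro a ha
    have h1 : (R.coeff b0 a : ℝ) ≤ 0 := hno a ha
    have h2 : (0:ℝ) ≤ R.coeff b0 a := Nat.cast_nonneg _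
    rw [le_antisymm h1 h2, zero_smul]
  obtain ⟨a, ha, hapos⟩ := this
  have h0 := hcoords a ha
  have hterm : 0 < g b0 * (R.coeff b0 a : ℝ) := mul_pos (hg b0 hb0) hapos
  have hall : ∀ b ∈ S, 0 ≤ g b * (R.coeff b a : ℝ) :=
    fun b hb => mul_nonneg (hg b hb).le (Nat.cast_nonneg _)
  have := Finset.sum_pos' hall ⟨b0, hb0, hterm⟩
  rw [h0] at this
  exact lt_irrefl _ this

end AuxAntichain

/-- an antichain of positive roots is linearly independent. -/
theorem antichain_linearIndependent {n : ℕ} (R : CRS n)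
    (B : Finset (EuclideanSpace ℝ (Fin n))) (hB : B ⊆ R.Pos)
    (hanti : ∀ α ∈ B, ∀ β ∈ B, α ≠ β → ¬ R.rle β α) :
    LinearIndependent ℝ (fun b : B => (b : EuclideanSpace ℝ (Fin n))) := by
  classical
  rw [Fintype.linearIndependent_iff]
  intro g hg
  by_contra hc
  push_neg at hc
  obtain ⟨i0, hi0⟩ := hc
  -- extend g to the whole space
  set G : EuclideanSpace ℝ (Fin n) → ℝ := fun x => if h : x ∈ B then g ⟨x, h⟩ else 0 with hG
  have hGval : ∀ b : B, G (b : EuclideanSpace ℝ (Fin n)) = g b := by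
    intro b; simp [hG, b.2]
  have hsum : ∑ b ∈ B, G b • b = 0 := by
    rw [← Finset.sum_attach B (fun b => G b • b)]
    rw [← hg]
    apply Finset.sum_congr rfl
    intro b _
    rw [hGval]
  set P : Finset (EuclideanSpace ℝ (Fin n)) := B.filter (fun b => 0 < G b) with hP
  set N : Finset (EuclideanSpace ℝ (Fin n)) := B.filter (fun b => G b < 0) with hN
  have hPB : P ⊆ B := Finset.filter_subset _ _
  have hNB : N ⊆ B := Finset.filter_subset _ _
  have hsplit : ∑ b ∈ P, G b • b + ∑ b ∈ N, G b • b = 0 := by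
    rw [← hsum]
    rw [← Finset.sum_filter_add_sum_filter_not B (fun b => 0 < G b) (fun b => G b • b)]
    congr 1
    apply Finset.sum_subset
    · intro x hx
      simp only [hN, Finset.mem_filter] at hx ⊢
      exact ⟨hx.1, not_lt.mpr hx.2.le⟩
    · intro x hx hxn
      simp only [Finset.mem_filter] at hx
      simp only [hN, Finset.mem_filter] at hxn
      push_neg at hxn
      have hx0 : G x = 0 := le_antisymm (not_lt.mp hx.2) (hxn hx.1)
      rw [hx0, zero_smul]
  set v : EuclideanSpace ℝ (Fin n) := ∑ b ∈ P, G b • b with hv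
  have hveq : v = ∑ b ∈ N, (-G b) • b := by
    have : v = -∑ b ∈ N, G b • b := by
      rw [hv, eq_neg_iff_add_eq_zero]; exact hsplit
    rw [this, ← Finset.sum_neg_distrib]
    apply Finset.sum_congr rfl
    intro b _
    rw [neg_smul]
  -- ⟪v, v⟫ ≤ 0
  have hvv : (inner ℝ v v : ℝ) ≤ 0 := by
    nth_rewrite 2 [hveq]
    rw [hv]
    rw [sum_inner]
    apply Finset.sum_nonpos
    intro i hi
    rw [real_inner_smul_left, inner_sum]
    apply mul_nonpos_of_nonneg_of_nonpos (Finset.mem_filter.mp hi).2.le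
    apply Finset.sum_nonpos
    intro j hj
    rw [real_inner_smul_right]
    have hiB := hPB hi
    have hjB := hNB hj
    have hiG : 0 < G i := (Finset.mem_filter.mp hi).2
    have hjG : G j < 0 := (Finset.mem_filter.mp hj).2
    have hij : i ≠ j := by
      intro h; rw [h] at hiG; exact absurd hiG (not_lt.mpr hjG.le)
    have hinner := R.anti_inner_nonpos hB hanti hiB hjB hij
    have : 0 ≤ -G j := neg_nonneg.mpr hjG.le
    nlinarith
  have hv0 : v = 0 := by
    have := real_inner_self_nonneg (x := v)
    have heq : (inner ℝ v v : ℝ) = 0 := le_antisymm hvv this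
    exact inner_self_eq_zero.mp (by exact_mod_cast heq)
  -- P and N are empty
  have hPsub : P ⊆ R.Pos := hPB.trans hB
  have hNsub : N ⊆ R.Pos := hNB.trans hB
  have hPempty : P = ∅ := by
    apply R.pos_comb_ne_zero hPsub G
    · intro b hb; exact (Finset.mem_filter.mp hb).2
    · rw [← hv]; exact hv0
  have hNempty : N = ∅ := by
    apply R.pos_comb_ne_zero hNsub (fun b => -G b)
    · intro b hb; exact neg_pos.mpr (Finset.mem_filter.mp hb).2
    · rw [← hveq]; exact hv0
  -- contradiction with g i0 ≠ 0
  apply hi0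
  rw [← hGval i0]
  by_contra hGne
  rcases lt_or_gt_of_ne hGne with h | h
  · have : (i0 : EuclideanSpace ℝ (Fin n)) ∈ N := Finset.mem_filter.mpr ⟨i0.2, h⟩
    rw [hNempty] at this; exact absurd this (Finset.notMem_empty _)
  · have : (i0 : EuclideanSpace ℝ (Fin n)) ∈ P := Finset.mem_filter.mpr ⟨i0.2, h⟩
    rw [hPempty] at this; exact absurd this (Finset.notMem_empty _)
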